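/- The curve C = {(cos θ, sin 2θ, cos 3θ) : θ ∈ ℝ} ⊂ ℝ³ is exactly the set of real points satisfying x² - y² - xz = 0, z - 4x³ + 3x = 0, and -1 ≤ x ≤ 1. -/
import Mathlib


open Real

/-- The curve `{(cos θ, sin 2θ, cos 3θ) : θ ∈ ℝ}` is exactly the set of real points
satisfying `x² - y² - xz = 0`, `z - 4x³ + 3x = 0` and `-1 ≤ x ≤ 1`. -/
theorem trig_curve_eq_real_variety :
    {p : ℝ × ℝ × ℝ | ∃ θ : ℝ, p = (cos θ, sin (2 * θ), cos (3 * θ))} =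
      {p : ℝ × ℝ × ℝ |
        p.1 ^ 2 - p.2.1 ^ 2 - p.1 * p.2.2 = 0 ∧
        p.2.2 - 4 * p.1 ^ 3 + 3 * p.1 = 0 ∧
        -1 ≤ p.1 ∧ p.1 ≤ 1} := by
  ext ⟨x, y, z⟩
  simp only [Set.mem_setOf_eq, Prod.mk.injEq]
  constructor
  · rintro ⟨θ, rfl, rfl, rfl⟩
    have hpyth := sin_sq_add_cos_sq θ
    rw [sin_two_mul, cos_three_mul]
    refine ⟨by nlinarith, by ring, neg_one_le_cos θ, cos_le_one θ⟩
  · rintro ⟨h1, h2, hx1, hx2⟩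
    set s : ℝ := Real.sqrt (1 - x ^ 2) with hs
    have hs2 : s ^ 2 = 1 - x ^ 2 := Real.sq_sqrt (by nlinarith)
    have hy2 : (y - 2 * x * s) * (y + 2 * x * s) = 0 := by nlinarith
    have hcos : cos (arccos x) = x := Real.cos_arccos hx1 hx2
    have hsin : sin (arccos x) = s := by
      rw [hs]; exact Real.sin_arccos x
    rcases mul_eq_zero.1 hy2 with h | h
    · refine ⟨arccos x, ?_, ?_, ?_⟩
      · exact hcos.symm
      · rw [sin_two_mul, hsin, hcos]; linarith
      · rw [cos_three_mul, hcos]; linarith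
    · refine ⟨-arccos x, ?_, ?_, ?_⟩
      · rw [cos_neg]; exact hcos.symm
      · rw [mul_neg, sin_neg, sin_two_mul, hsin, hcos]; linarith
      · rw [mul_neg, cos_neg, cos_three_mul, hcos]; linarith
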